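/- For all real α, β, ρ, x, all natural numbers n, and every natural number m ≥ 1: B^{1,1,q}_{n+m;x}(α,β,ρ) = Σ_{r=0}^{n} Σ_{j=0}^{m} S^{1,1,q}_{m,j}(α,β,ρ) · q^{r(βj − αm − ρ)} · binom(n,r)_{q^{−α}} · x^j · B^{1,1,q}_{r;x}(α,β,0) · Π_{i=0}^{n−r−1} [βj − ρ − α(m+i)]_q. (Spivey-type formula for Type II generalized q-Bell polynomials; the factor x^j, coming from multiplying S^{1,1,q}_{r,k−j}(α,β,0) by x^k and summing over k, is required.) -/

import Mathlib

/-- The `q`-bracket `[t]_q = (q^t - 1)/(q - 1)` (real exponentiation). -/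
noncomputable def qBracket (q t : ℝ) : ℝ := (q ^ t - 1) / (q - 1)

open Classical in
/-- The `Q`-binomial coefficient: the sum of `Q^(t₁+⋯+t_{n-k})` over all weakly
increasing integer tuples `0 ≤ t₁ ≤ ⋯ ≤ t_{n-k} ≤ k` when `k ≤ n`, and `0` when `k > n`. -/
noncomputable def qBinom (Q : ℝ) (n k : ℕ) : ℝ :=
  if k ≤ n then
    ∑ f ∈ Finset.univ.filter (fun f : Fin (n - k) → Fin (k + 1) => Monotone f),
      Q ^ (∑ i, (f i : ℕ))
  else 0

/-- The generalized `q`-Stirling numbers `S^{c,d}_{s,q}[n,k]`. -/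
noncomputable def genStirlingCD (c d s q : ℝ) : ℕ → ℕ → ℝ
  | 0, 0 => 1
  | 0, _ + 1 => 0
  | _ + 1, 0 => 0
  | n + 1, k + 1 =>
    if k + 1 ≤ n + 1 then
      q ^ (c * (n : ℝ) + d + ((n : ℝ) - (k : ℝ)) * (s - 1)) * genStirlingCD c d s q n k
        + qBracket q (c * (n : ℝ) + d + ((n : ℝ) - (k : ℝ) - 1) * (s - 1)) *
            genStirlingCD c d s q n (k + 1)
    else 0

/-- The Type II generalized `q`-Stirling numbers of Remmel and Wachs,
via the identification `S^{1,1,q}_{n,k}(α,β,ρ) = S^{β-α,-ρ}_{1-β,q}[n,k]`. -/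
noncomputable def typeIIStirling (q α β ρ : ℝ) (n k : ℕ) : ℝ :=
  genStirlingCD (β - α) (-ρ) (1 - β) q n k

/-- The Type II generalized Bell polynomial `B^{1,1,q}_{n;x}(α,β,ρ)`. -/
noncomputable def typeIIBell (q α β ρ : ℝ) (n : ℕ) (x : ℝ) : ℝ :=
  ∑ k ∈ Finset.range (n + 1), typeIIStirling q α β ρ n k * x ^ k

/-! ### Auxiliary lemmas -/

lemma qBracket_add (q : ℝ) (hq : 0 < q) (hq1 : q ≠ 1) (a b : ℝ) :
    qBracket q (a + b) = qBracket q a + q ^ a * qBracket q b := by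
  have h : q - 1 ≠ 0 := sub_ne_zero.mpr hq1
  unfold qBracket
  rw [Real.rpow_add hq]
  field_simp
  ring

lemma qBracket_zero (q : ℝ) : qBracket q 0 = 0 := by simp [qBracket]

lemma genStirlingCD_succ_succ (c d s q : ℝ) {n k : ℕ} (h : k ≤ n) :
    genStirlingCD c d s q (n + 1) (k + 1)
    = q ^ (c * (n : ℝ) + d + ((n : ℝ) - (k : ℝ)) * (s - 1)) * genStirlingCD c d s q n k
        + qBracket q (c * (n : ℝ) + d + ((n : ℝ) - (k : ℝ) - 1) * (s - 1)) *
            genStirlingCD c d s q n (k + 1) := by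
  rw [genStirlingCD, if_pos (by omega)]

lemma genStirlingCD_succ_zero (c d s q : ℝ) (n : ℕ) :
    genStirlingCD c d s q (n + 1) 0 = 0 := by rw [genStirlingCD]

lemma genStirlingCD_zero (c d s q : ℝ) (k : ℕ) :
    genStirlingCD c d s q 0 k = if k = 0 then 1 else 0 := by
  cases k with
  | zero => rw [genStirlingCD]; simp
  | succ k => rw [genStirlingCD]; simp

lemma genStirlingCD_eq_zero (c d s q : ℝ) {n k : ℕ} (h : n < k) :
    genStirlingCD c d s q n k = 0 := by
  cases n with
  | zero => cases k with
    | zero => omega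
    | succ k => rw [genStirlingCD]
  | succ n =>
    cases k with
    | zero => omega
    | succ k => rw [genStirlingCD, if_neg (by omega)]

/-- Extension of the Type II Stirling numbers to integer second argument. -/
noncomputable def sHat (q α β ρ : ℝ) (n : ℕ) (z : ℤ) : ℝ :=
  if 0 ≤ z then genStirlingCD (β - α) (-ρ) (1 - β) q n z.toNat else 0

lemma sHat_zero (q α β ρ : ℝ) (w : ℤ) : sHat q α β ρ 0 w = if w = 0 then 1 else 0 := by
  unfold sHat
  rcases lt_trichotomy w 0 with h | h | h
  · rw [if_neg (by omega), if_neg (by omega)]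
  · subst h; simp [genStirlingCD_zero]
  · rw [if_pos (by omega), genStirlingCD_zero, if_neg (by omega), if_neg (by omega)]

lemma sHat_succ (q α β ρ : ℝ) (n : ℕ) (hn : ρ = 0 ∨ 1 ≤ n) (z : ℤ) :
    sHat q α β ρ (n + 1) z
    = q ^ (β * ((z : ℝ) - 1) - α * (n : ℝ) - ρ) * sHat q α β ρ n (z - 1)
      + qBracket q (β * (z : ℝ) - α * (n : ℝ) - ρ) * sHat q α β ρ n z := by
  rcases le_or_gt 1 z with hz | hz
  · obtain ⟨k, rfl⟩ : ∃ k : ℕ, z = (k : ℤ) + 1 := ⟨(z - 1).toNat, by omega⟩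
    have h1 : ((k : ℤ) + 1).toNat = k + 1 := by omega
    have h2 : ((k : ℤ) + 1 - 1).toNat = k := by omega
    simp only [sHat, if_pos (by omega : (0:ℤ) ≤ (k:ℤ) + 1),
      if_pos (by omega : (0:ℤ) ≤ (k:ℤ) + 1 - 1), h1, h2]
    rcases le_or_gt k n with hk | hk
    · rw [genStirlingCD_succ_succ _ _ _ _ hk]
      congr 2
      · push_cast; ring
      · push_cast; ring
    · rw [genStirlingCD_eq_zero _ _ _ _ (by omega),
        genStirlingCD_eq_zero _ _ _ _ (by omega),
        genStirlingCD_eq_zero _ _ _ _ (by omega)]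
      ring
  · have hL : sHat q α β ρ (n + 1) z = 0 := by
      rcases eq_or_lt_of_le (by omega : z ≤ 0) with h | h
      · simp [sHat, h, genStirlingCD_succ_zero]
      · simp [sHat, not_le.mpr h]
    have hR1 : sHat q α β ρ n (z - 1) = 0 := by
      simp [sHat, show ¬ (0:ℤ) ≤ z - 1 by omega, show ¬ (1:ℤ) ≤ z by omega]
    rw [hL, hR1, mul_zero, zero_add]
    rcases lt_or_eq_of_le (by omega : z ≤ 0) with h | h
    · simp [sHat, not_le.mpr h]
    · subst h
      rcases hn with h0 | h1
      · cases n with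
        | zero =>
          subst h0
          have : β * (((0:ℤ)) : ℝ) - α * ((0:ℕ) : ℝ) - 0 = 0 := by push_cast; ring
          rw [this, qBracket_zero, zero_mul]
        | succ n => simp [sHat, genStirlingCD_succ_zero]
      · cases n with
        | zero => omega
        | succ n => simp [sHat, genStirlingCD_succ_zero]

lemma sHat_eq_zero_of_lt (q α β ρ : ℝ) {n : ℕ} {z : ℤ} (h : (n : ℤ) < z) :
    sHat q α β ρ n z = 0 := by
  unfold sHat
  rcases le_or_gt 0 z with h0 | h0
  · rw [if_pos h0, genStirlingCD_eq_zero _ _ _ _ (by omega)]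
  · rw [if_neg (by omega)]

lemma sHat_neg (q α β ρ : ℝ) (n : ℕ) {z : ℤ} (h : z < 0) :
    sHat q α β ρ n z = 0 := by
  unfold sHat; rw [if_neg (by omega)]

/-! ### q-binomial lemmas -/

lemma qBinom_eq_zero (Q : ℝ) {n k : ℕ} (h : n < k) : qBinom Q n k = 0 := by
  rw [qBinom, if_neg (by omega)]

lemma qBinom_zero_right (Q : ℝ) (n : ℕ) : qBinom Q n 0 = 1 := by
  rw [qBinom, if_pos (Nat.zero_le n)]
  have h1 : ∀ f : Fin (n - 0) → Fin 1, Monotone f := fun f i j _ =>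
    le_of_eq (Subsingleton.elim _ _)
  rw [Finset.filter_true_of_mem (fun f _ => h1 f)]
  have h2 : ∀ f : Fin (n - 0) → Fin 1, (∑ i, ((f i : ℕ))) = 0 := by
    intro f
    apply Finset.sum_eq_zero
    intro i _
    omega
  rw [Finset.sum_congr rfl (fun f _ => by rw [h2 f, pow_zero])]
  simp

lemma qBinom_self (Q : ℝ) (n : ℕ) : qBinom Q n n = 1 := by
  rw [qBinom, if_pos le_rfl]
  have h : n - n = 0 := by omega
  rw [h]
  have hf : (Finset.univ.filter (fun f : Fin 0 → Fin (n+1) => Monotone f)) = Finset.univ :=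
    Finset.filter_true_of_mem (fun f _ => fun i j _ => i.elim0)
  rw [hf, Finset.univ_unique, Finset.sum_singleton]
  simp

open Finset in
lemma mono_split (Q : ℝ) (L k : ℕ) :
    ∑ f ∈ univ.filter (fun f : Fin (L+1) → Fin (k+2) => Monotone f), Q ^ (∑ i, (f i : ℕ))
    = Q ^ (L+1) *
        ∑ g ∈ univ.filter (fun g : Fin (L+1) → Fin (k+1) => Monotone g), Q ^ (∑ i, (g i : ℕ))
      + ∑ h ∈ univ.filter (fun h : Fin L → Fin (k+2) => Monotone h), Q ^ (∑ i, (h i : ℕ)) := by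
  rw [← Finset.sum_filter_add_sum_filter_not
    (univ.filter (fun f : Fin (L+1) → Fin (k+2) => Monotone f)) (fun f => f 0 = 0)]
  have hA : ∑ f ∈ (univ.filter (fun f : Fin (L+1) → Fin (k+2) => Monotone f)).filter
      (fun f => f 0 = 0), Q ^ (∑ i, (f i : ℕ))
      = ∑ h ∈ univ.filter (fun h : Fin L → Fin (k+2) => Monotone h), Q ^ (∑ i, (h i : ℕ)) := by
    apply Finset.sum_nbij' (i := fun f => fun t : Fin L => f t.succ)
      (j := fun h => Fin.cons 0 h)
    · intro f hf
      simp only [Finset.mem_filter, Finset.mem_univ, true_and] at hf ⊢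
      exact hf.1.comp (Fin.strictMono_succ.monotone)
    · intro h hh
      simp only [Finset.mem_filter, Finset.mem_univ, true_and] at hh ⊢
      constructor
      · intro i j hij
        rcases Fin.eq_zero_or_eq_succ i with rfl | ⟨i', rfl⟩
        · rw [Fin.cons_zero]; exact Fin.zero_le _
        · rcases Fin.eq_zero_or_eq_succ j with rfl | ⟨j', rfl⟩
          · exact absurd hij (by simp [Fin.le_def])
          · rw [Fin.cons_succ, Fin.cons_succ]
            exact hh (by rwa [Fin.succ_le_succ_iff] at hij)
      · exact Fin.cons_zero _ _
    · intro f hf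
      simp only [Finset.mem_filter, Finset.mem_univ, true_and] at hf
      funext t
      rcases Fin.eq_zero_or_eq_succ t with rfl | ⟨t', rfl⟩
      · rw [Fin.cons_zero, hf.2]
      · rw [Fin.cons_succ]
    · intro h hh
      funext t
      rw [Fin.cons_succ]
    · intro f hf
      simp only [Finset.mem_filter, Finset.mem_univ, true_and] at hf
      congr 1
      rw [Fin.sum_univ_succ, hf.2]
      simp
  have hB : ∑ f ∈ (univ.filter (fun f : Fin (L+1) → Fin (k+2) => Monotone f)).filter
      (fun f => ¬ f 0 = 0), Q ^ (∑ i, (f i : ℕ))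
      = ∑ g ∈ univ.filter (fun g : Fin (L+1) → Fin (k+1) => Monotone g),
          Q ^ (L+1) * Q ^ (∑ i, (g i : ℕ)) := by
    apply Finset.sum_nbij'
      (i := fun f => fun t : Fin (L+1) =>
        (⟨(f t : ℕ) - 1, by have := (f t).isLt; omega⟩ : Fin (k+1)))
      (j := fun g => fun t : Fin (L+1) => (g t).succ)
    · intro f hf
      simp only [Finset.mem_filter, Finset.mem_univ, true_and] at hf ⊢
      intro a b hab
      simp only [Fin.mk_le_mk]
      exact Nat.sub_le_sub_right (hf.1 hab) 1
    · intro g hg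
      simp only [Finset.mem_filter, Finset.mem_univ, true_and] at hg ⊢
      refine ⟨fun a b hab => ?_, Fin.succ_ne_zero _⟩
      rw [Fin.succ_le_succ_iff]
      exact hg hab
    · intro f hf
      simp only [Finset.mem_filter, Finset.mem_univ, true_and] at hf
      have hge : ∀ t, 1 ≤ (f t : ℕ) := by
        intro t
        have h0 : f 0 ≤ f t := hf.1 (Fin.zero_le t)
        have : (f 0 : ℕ) ≠ 0 := fun hc => hf.2 (Fin.ext hc)
        have := (Fin.le_def.mp h0)
        omega
      funext t
      apply Fin.ext
      simp [Nat.sub_add_cancel (hge t)]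
    · intro g hg
      funext t
      apply Fin.ext
      simp
    · intro f hf
      simp only [Finset.mem_filter, Finset.mem_univ, true_and] at hf
      have hge : ∀ t, 1 ≤ (f t : ℕ) := by
        intro t
        have h0 : f 0 ≤ f t := hf.1 (Fin.zero_le t)
        have : (f 0 : ℕ) ≠ 0 := fun hc => hf.2 (Fin.ext hc)
        have := (Fin.le_def.mp h0)
        omega
      have hsum : (∑ i, (f i : ℕ)) = (∑ i : Fin (L+1), ((f i : ℕ) - 1)) + (L+1) := by
        rw [Finset.sum_congr rfl (fun i _ => (Nat.sub_add_cancel (hge i)).symm),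
          Finset.sum_add_distrib]
        simp
      rw [hsum, pow_add, mul_comm]
  rw [hA, hB, ← Finset.mul_sum]
  ring

lemma qBinom_pascal (Q : ℝ) (n r : ℕ) :
    qBinom Q (n+1) (r+1) = Q ^ (n - r) * qBinom Q n r + qBinom Q n (r+1) := by
  rcases lt_trichotomy r n with h | rfl | h
  · obtain ⟨l, hl⟩ : ∃ l, n - r = l + 1 := ⟨n - r - 1, by omega⟩
    rw [qBinom, if_pos (by omega), qBinom, if_pos (by omega), qBinom, if_pos (by omega)]
    have e1 : n + 1 - (r + 1) = l + 1 := by omega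
    have e3 : n - (r + 1) = l := by omega
    rw [e1, hl, e3]
    exact mono_split Q l r
  · rw [qBinom_self, qBinom_self, qBinom_eq_zero Q (by omega), Nat.sub_self, pow_zero]
    ring
  · rw [qBinom_eq_zero Q (by omega), qBinom_eq_zero Q (by omega), qBinom_eq_zero Q (by omega)]
    ring

lemma qpow_nat (q α : ℝ) (hq : 0 < q) (N : ℕ) :
    (q ^ (-α)) ^ N = q ^ (-α * (N : ℝ)) := by
  rw [Real.rpow_mul hq.le, Real.rpow_natCast]

/-- The scalar algebra at the heart of the inductive step. -/
lemma key_alg (q : ℝ) (hq : 0 < q) (hq1 : q ≠ 1)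
    (X1 X2 C P A re e d a1 a2 E1 E2 re1 b D : ℝ)
    (h1 : E1 = e + d + a1) (h2 : E2 = e + d + a2) (h3 : re1 = re + e) (h4 : b = e + d)
    (hD : D = q ^ d) :
    q ^ E1 * (A * q ^ re * C * X1 * P) + qBracket q E2 * (A * q ^ re * C * X2 * P)
    = A * q ^ re1 * D * C * (q ^ a1 * X1 + qBracket q a2 * X2) * P
      + A * q ^ re * C * X2 * (P * qBracket q b) := by
  subst h1 h2 h3 h4 hD
  have hne : q - 1 ≠ 0 := sub_ne_zero.mpr hq1
  have hqe : ∀ t : ℝ, q ^ t ≠ 0 := fun t => (Real.rpow_pos_of_pos hq t).ne'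
  unfold qBracket
  simp only [Real.rpow_add hq]
  field_simp
  ring

open Finset in
/-- Abstract re-summation step for the induction. -/
lemma assemble (n M : ℕ) (X1 X2 F G TT : ℕ → ℕ → ℝ)
    (hkey : ∀ r ∈ Finset.range (n+1), ∀ j ∈ Finset.range (M+1),
      X1 r j + X2 r j = F r j + G r j)
    (hG0 : ∀ j ∈ Finset.range (M+1), G 0 j = TT 0 j)
    (hGtop : ∀ j ∈ Finset.range (M+1), G (n+1) j = 0)
    (hFG : ∀ r ∈ Finset.range (n+1), ∀ j ∈ Finset.range (M+1),
      F r j + G (r+1) j = TT (r+1) j) :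
    (∑ r ∈ Finset.range (n+1), ∑ j ∈ Finset.range (M+1), X1 r j)
      + ∑ r ∈ Finset.range (n+1), ∑ j ∈ Finset.range (M+1), X2 r j
    = ∑ r ∈ Finset.range (n+2), ∑ j ∈ Finset.range (M+1), TT r j := by
  calc (∑ r ∈ range (n+1), ∑ j ∈ range (M+1), X1 r j)
      + ∑ r ∈ range (n+1), ∑ j ∈ range (M+1), X2 r j
      = ∑ r ∈ range (n+1), ((∑ j ∈ range (M+1), X1 r j) + ∑ j ∈ range (M+1), X2 r j) :=
        Finset.sum_add_distrib.symm
    _ = ∑ r ∈ range (n+1), ((∑ j ∈ range (M+1), F r j) + ∑ j ∈ range (M+1), G r j) := by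
        refine Finset.sum_congr rfl fun r hr => ?_
        rw [← Finset.sum_add_distrib, ← Finset.sum_add_distrib]
        exact Finset.sum_congr rfl (hkey r hr)
    _ = (∑ r ∈ range (n+1), ∑ j ∈ range (M+1), F r j)
        + ∑ r ∈ range (n+1), ∑ j ∈ range (M+1), G r j := Finset.sum_add_distrib
    _ = (∑ r ∈ range (n+1), ∑ j ∈ range (M+1), F r j)
        + ((∑ r ∈ range n, ∑ j ∈ range (M+1), G (r+1) j) + ∑ j ∈ range (M+1), G 0 j) := by
        rw [Finset.sum_range_succ' (fun r => ∑ j ∈ range (M+1), G r j) n]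
    _ = (∑ r ∈ range (n+1), ∑ j ∈ range (M+1), F r j)
        + ((∑ r ∈ range (n+1), ∑ j ∈ range (M+1), G (r+1) j) + ∑ j ∈ range (M+1), G 0 j) := by
        rw [Finset.sum_range_succ (fun r => ∑ j ∈ range (M+1), G (r+1) j) n,
          Finset.sum_eq_zero hGtop, add_zero]
    _ = (∑ r ∈ range (n+1),
          ((∑ j ∈ range (M+1), F r j) + ∑ j ∈ range (M+1), G (r+1) j))
        + ∑ j ∈ range (M+1), G 0 j := by
        rw [← add_assoc, ← Finset.sum_add_distrib]
    _ = (∑ r ∈ range (n+1), ∑ j ∈ range (M+1), TT (r+1) j)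
        + ∑ j ∈ range (M+1), TT 0 j := by
        congr 1
        · refine Finset.sum_congr rfl fun r hr => ?_
          rw [← Finset.sum_add_distrib]
          exact Finset.sum_congr rfl (hFG r hr)
        · exact Finset.sum_congr rfl hG0
    _ = ∑ r ∈ range (n+2), ∑ j ∈ range (M+1), TT r j :=
        (Finset.sum_range_succ' (fun r => ∑ j ∈ range (M+1), TT r j) (n+1)).symm

/-! ### The main Stirling-level identity -/

lemma stirling_split (q : ℝ) (hq : 0 < q) (hq1 : q ≠ 1) (α β ρ : ℝ) (m : ℕ) (hm : 1 ≤ m) :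
    ∀ (n : ℕ) (z : ℤ),
    sHat q α β ρ (n + m) z
    = ∑ r ∈ Finset.range (n + 1), ∑ j ∈ Finset.range (m + 1),
        genStirlingCD (β - α) (-ρ) (1 - β) q m j * q ^ ((r : ℝ) * (β * (j : ℝ) - α * (m : ℝ) - ρ)) *
        qBinom (q ^ (-α)) n r * sHat q α β 0 r (z - (j : ℤ)) *
        ∏ i ∈ Finset.range (n - r), qBracket q (β * (j : ℝ) - ρ - α * ((m : ℝ) + (i : ℝ))) := by
  intro n
  induction n with
  | zero =>
    intro z
    rw [Finset.sum_range_one]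
    have hterm : ∀ j ∈ Finset.range (m + 1),
        genStirlingCD (β - α) (-ρ) (1 - β) q m j *
          q ^ ((0 : ℕ) * (β * (j : ℝ) - α * (m : ℝ) - ρ) : ℝ) *
          qBinom (q ^ (-α)) 0 0 * sHat q α β 0 0 (z - (j : ℤ)) *
          ∏ i ∈ Finset.range (0 - 0), qBracket q (β * (j : ℝ) - ρ - α * ((m : ℝ) + (i : ℝ)))
        = if ((j : ℤ)) = z then genStirlingCD (β - α) (-ρ) (1 - β) q m j else 0 := by
      intro j _
      rw [sHat_zero, qBinom_zero_right]
      simp only [Nat.cast_zero, zero_mul, Real.rpow_zero, Nat.sub_self,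
        Finset.range_zero, Finset.prod_empty, mul_one, one_mul]
      by_cases h : (j : ℤ) = z
      · rw [if_pos (by omega), if_pos h, mul_one]
      · rw [if_neg (by omega), if_neg h, mul_zero]
    rw [Finset.sum_congr rfl hterm]
    rcases lt_or_ge z 0 with hz | hz
    · rw [Finset.sum_eq_zero (fun j _ => if_neg (by omega)), Nat.zero_add,
        sHat_neg q α β ρ (m) hz]
    · obtain ⟨t, rfl⟩ : ∃ t : ℕ, z = (t : ℤ) := ⟨z.toNat, by omega⟩
      have hLHS : sHat q α β ρ (0 + m) (t : ℤ)
          = genStirlingCD (β - α) (-ρ) (1 - β) q m t := by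
        rw [Nat.zero_add]
        unfold sHat
        rw [if_pos (by omega)]
        simp
      rw [hLHS]
      have : ∀ j ∈ Finset.range (m + 1),
          (if ((j : ℤ)) = (t : ℤ) then genStirlingCD (β - α) (-ρ) (1 - β) q m j else 0)
          = if j = t then genStirlingCD (β - α) (-ρ) (1 - β) q m j else 0 := by
        intro j _
        by_cases h : j = t
        · rw [if_pos (by exact_mod_cast h), if_pos h]
        · rw [if_neg (by exact_mod_cast h), if_neg h]
      rw [Finset.sum_congr rfl this, Finset.sum_ite_eq' (Finset.range (m + 1)) t]
      by_cases ht : t ∈ Finset.range (m + 1)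
      · rw [if_pos ht]
      · rw [if_neg ht, genStirlingCD_eq_zero]
        simp only [Finset.mem_range] at ht
        omega
  | succ n ih =>
    intro z
    have hnm : n + 1 + m = (n + m) + 1 := by omega
    rw [hnm, sHat_succ q α β ρ (n + m) (Or.inr (by omega)) z, ih (z - 1), ih z]
    simp only [Finset.mul_sum]
    refine assemble n m
      (fun r j => q ^ (β * ((z:ℝ) - 1) - α * ((n + m : ℕ):ℝ) - ρ) *
        (genStirlingCD (β - α) (-ρ) (1 - β) q m j *
          q ^ ((r:ℝ) * (β * (j:ℝ) - α * (m:ℝ) - ρ)) *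
          qBinom (q ^ (-α)) n r * sHat q α β 0 r (z - 1 - (j:ℤ)) *
          ∏ i ∈ Finset.range (n - r), qBracket q (β * (j:ℝ) - ρ - α * ((m:ℝ) + (i:ℝ)))))
      (fun r j => qBracket q (β * (z:ℝ) - α * ((n + m : ℕ):ℝ) - ρ) *
        (genStirlingCD (β - α) (-ρ) (1 - β) q m j *
          q ^ ((r:ℝ) * (β * (j:ℝ) - α * (m:ℝ) - ρ)) *
          qBinom (q ^ (-α)) n r * sHat q α β 0 r (z - (j:ℤ)) *
          ∏ i ∈ Finset.range (n - r), qBracket q (β * (j:ℝ) - ρ - α * ((m:ℝ) + (i:ℝ)))))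
      (fun r j => genStirlingCD (β - α) (-ρ) (1 - β) q m j *
          q ^ (((r:ℝ) + 1) * (β * (j:ℝ) - α * (m:ℝ) - ρ)) *
          (q ^ (-α)) ^ (n - r) * qBinom (q ^ (-α)) n r * sHat q α β 0 (r + 1) (z - (j:ℤ)) *
          ∏ i ∈ Finset.range (n - r), qBracket q (β * (j:ℝ) - ρ - α * ((m:ℝ) + (i:ℝ))))
      (fun r j => genStirlingCD (β - α) (-ρ) (1 - β) q m j *
          q ^ ((r:ℝ) * (β * (j:ℝ) - α * (m:ℝ) - ρ)) *
          qBinom (q ^ (-α)) n r * sHat q α β 0 r (z - (j:ℤ)) *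
          ∏ i ∈ Finset.range (n + 1 - r), qBracket q (β * (j:ℝ) - ρ - α * ((m:ℝ) + (i:ℝ))))
      (fun r j => genStirlingCD (β - α) (-ρ) (1 - β) q m j *
          q ^ ((r:ℝ) * (β * (j:ℝ) - α * (m:ℝ) - ρ)) *
          qBinom (q ^ (-α)) (n + 1) r * sHat q α β 0 r (z - (j:ℤ)) *
          ∏ i ∈ Finset.range (n + 1 - r), qBracket q (β * (j:ℝ) - ρ - α * ((m:ℝ) + (i:ℝ))))
      ?_ ?_ ?_ ?_
    · -- hkey
      intro r hr j hj
      beta_reduce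
      have hr' : r ≤ n := by
        have := Finset.mem_range.mp hr; omega
      rw [show z - 1 - (j:ℤ) = z - (j:ℤ) - 1 from by ring,
        sHat_succ q α β 0 r (Or.inl rfl) (z - (j:ℤ)),
        show n + 1 - r = (n - r) + 1 from by omega, Finset.prod_range_succ]
      refine key_alg q hq hq1 _ _ _ _ _ _
        (β * (j:ℝ) - α * (m:ℝ) - ρ) (-α * ((n:ℝ) - (r:ℝ))) _ _ _ _ _ _ _
        ?_ ?_ ?_ ?_ ?_
      · push_cast; ring
      · push_cast; ring
      · ring
      · push_cast [Nat.cast_sub hr']; ring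
      · rw [qpow_nat q α hq]
        congr 1
        push_cast [Nat.cast_sub hr']
        ring
    · -- hG0
      intro j hj
      beta_reduce
      rw [qBinom_zero_right, qBinom_zero_right]
    · -- hGtop
      intro j hj
      beta_reduce
      rw [qBinom_eq_zero (q ^ (-α)) (by omega : n < n + 1)]
      ring
    · -- hFG
      intro r hr j hj
      beta_reduce
      rw [qBinom_pascal (q ^ (-α)) n r, show n + 1 - (r + 1) = n - r from by omega]
      push_cast
      ring

/-- Spivey-type formula for Type II generalized `q`-Bell polynomials. -/
theorem spivey_typeII_bell (q : ℝ) (hq : 0 < q) (hq1 : q ≠ 1) (α β ρ x : ℝ) (n m : ℕ)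
    (hm : 1 ≤ m) :
    typeIIBell q α β ρ (n + m) x
    = ∑ r ∈ Finset.range (n + 1), ∑ j ∈ Finset.range (m + 1),
        typeIIStirling q α β ρ m j *
          q ^ ((r : ℝ) * (β * (j : ℝ) - α * (m : ℝ) - ρ)) *
          qBinom (q ^ (-α)) n r * x ^ j * typeIIBell q α β 0 r x *
          ∏ i ∈ Finset.range (n - r),
            qBracket q (β * (j : ℝ) - ρ - α * ((m : ℝ) + (i : ℝ))) := by
  have hS : ∀ K : ℕ, typeIIStirling q α β ρ (n + m) K = sHat q α β ρ (n + m) (K : ℤ) := by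
    intro K
    unfold typeIIStirling sHat
    rw [if_pos (Int.natCast_nonneg K)]
    simp
  have hinner : ∀ r ∈ Finset.range (n + 1), ∀ j ∈ Finset.range (m + 1),
      (∑ K ∈ Finset.range (n + m + 1), sHat q α β 0 r ((K : ℤ) - (j : ℤ)) * x ^ K)
      = x ^ j * typeIIBell q α β 0 r x := by
    intro r hr j hj
    have hr' : r ≤ n := by have := Finset.mem_range.mp hr; omega
    have hj' : j ≤ m := by have := Finset.mem_range.mp hj; omega
    have hsub : Finset.Ico j (j + r + 1) ⊆ Finset.range (n + m + 1) := by
      intro K hK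
      rw [Finset.mem_Ico] at hK
      rw [Finset.mem_range]
      omega
    have hvan : ∀ K ∈ Finset.range (n + m + 1), K ∉ Finset.Ico j (j + r + 1) →
        sHat q α β 0 r ((K : ℤ) - (j : ℤ)) * x ^ K = 0 := by
      intro K _ hNot
      rw [Finset.mem_Ico] at hNot
      rcases lt_or_ge K j with h | h
      · rw [sHat_neg q α β 0 r (by omega : (K : ℤ) - (j : ℤ) < 0)]
        ring
      · have hK2 : j + r + 1 ≤ K := by omega
        rw [sHat_eq_zero_of_lt q α β 0 (by omega : (r : ℤ) < (K : ℤ) - (j : ℤ))]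
        ring
    calc (∑ K ∈ Finset.range (n + m + 1), sHat q α β 0 r ((K : ℤ) - (j : ℤ)) * x ^ K)
        = ∑ K ∈ Finset.Ico j (j + r + 1), sHat q α β 0 r ((K : ℤ) - (j : ℤ)) * x ^ K :=
          (Finset.sum_subset hsub hvan).symm
      _ = ∑ k ∈ Finset.range (j + r + 1 - j),
            sHat q α β 0 r (((j + k : ℕ) : ℤ) - (j : ℤ)) * x ^ (j + k) :=
          Finset.sum_Ico_eq_sum_range
            (fun K => sHat q α β 0 r ((K : ℤ) - (j : ℤ)) * x ^ K) j (j + r + 1)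
      _ = ∑ k ∈ Finset.range (r + 1), x ^ j * (typeIIStirling q α β 0 r k * x ^ k) := by
          rw [show j + r + 1 - j = r + 1 from by omega]
          refine Finset.sum_congr rfl fun k _ => ?_
          rw [show ((j + k : ℕ) : ℤ) - (j : ℤ) = (k : ℤ) from by push_cast; ring,
            show sHat q α β 0 r (k : ℤ) = typeIIStirling q α β 0 r k from by
              unfold sHat typeIIStirling
              rw [if_pos (Int.natCast_nonneg k)]
              simp,
            pow_add]
          ring
      _ = x ^ j * typeIIBell q α β 0 r x := by
          rw [← Finset.mul_sum]
          rfl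
  calc typeIIBell q α β ρ (n + m) x
      = ∑ K ∈ Finset.range (n + m + 1), typeIIStirling q α β ρ (n + m) K * x ^ K := rfl
    _ = ∑ K ∈ Finset.range (n + m + 1),
          (∑ r ∈ Finset.range (n + 1), ∑ j ∈ Finset.range (m + 1),
            genStirlingCD (β - α) (-ρ) (1 - β) q m j *
              q ^ ((r : ℝ) * (β * (j : ℝ) - α * (m : ℝ) - ρ)) *
              qBinom (q ^ (-α)) n r * sHat q α β 0 r ((K : ℤ) - (j : ℤ)) *
              ∏ i ∈ Finset.range (n - r),
                qBracket q (β * (j : ℝ) - ρ - α * ((m : ℝ) + (i : ℝ)))) * x ^ K := by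
        refine Finset.sum_congr rfl fun K _ => ?_
        rw [hS K, stirling_split q hq hq1 α β ρ m hm n (K : ℤ)]
    _ = ∑ K ∈ Finset.range (n + m + 1), ∑ r ∈ Finset.range (n + 1), ∑ j ∈ Finset.range (m + 1),
          (genStirlingCD (β - α) (-ρ) (1 - β) q m j *
              q ^ ((r : ℝ) * (β * (j : ℝ) - α * (m : ℝ) - ρ)) *
              qBinom (q ^ (-α)) n r * sHat q α β 0 r ((K : ℤ) - (j : ℤ)) *
              ∏ i ∈ Finset.range (n - r),
                qBracket q (β * (j : ℝ) - ρ - α * ((m : ℝ) + (i : ℝ)))) * x ^ K := by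
        simp only [Finset.sum_mul]
    _ = ∑ r ∈ Finset.range (n + 1), ∑ K ∈ Finset.range (n + m + 1), ∑ j ∈ Finset.range (m + 1),
          (genStirlingCD (β - α) (-ρ) (1 - β) q m j *
              q ^ ((r : ℝ) * (β * (j : ℝ) - α * (m : ℝ) - ρ)) *
              qBinom (q ^ (-α)) n r * sHat q α β 0 r ((K : ℤ) - (j : ℤ)) *
              ∏ i ∈ Finset.range (n - r),
                qBracket q (β * (j : ℝ) - ρ - α * ((m : ℝ) + (i : ℝ)))) * x ^ K :=
        Finset.sum_comm
    _ = ∑ r ∈ Finset.range (n + 1), ∑ j ∈ Finset.range (m + 1), ∑ K ∈ Finset.range (n + m + 1),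
          (genStirlingCD (β - α) (-ρ) (1 - β) q m j *
              q ^ ((r : ℝ) * (β * (j : ℝ) - α * (m : ℝ) - ρ)) *
              qBinom (q ^ (-α)) n r * sHat q α β 0 r ((K : ℤ) - (j : ℤ)) *
              ∏ i ∈ Finset.range (n - r),
                qBracket q (β * (j : ℝ) - ρ - α * ((m : ℝ) + (i : ℝ)))) * x ^ K :=
        Finset.sum_congr rfl fun r _ => Finset.sum_comm
    _ = ∑ r ∈ Finset.range (n + 1), ∑ j ∈ Finset.range (m + 1),
        typeIIStirling q α β ρ m j *
          q ^ ((r : ℝ) * (β * (j : ℝ) - α * (m : ℝ) - ρ)) *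
          qBinom (q ^ (-α)) n r * x ^ j * typeIIBell q α β 0 r x *
          ∏ i ∈ Finset.range (n - r),
            qBracket q (β * (j : ℝ) - ρ - α * ((m : ℝ) + (i : ℝ))) := by
        refine Finset.sum_congr rfl fun r hr => Finset.sum_congr rfl fun j hj => ?_
        have hc : ∀ K ∈ Finset.range (n + m + 1),
            (genStirlingCD (β - α) (-ρ) (1 - β) q m j *
              q ^ ((r : ℝ) * (β * (j : ℝ) - α * (m : ℝ) - ρ)) *
              qBinom (q ^ (-α)) n r * sHat q α β 0 r ((K : ℤ) - (j : ℤ)) *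
              ∏ i ∈ Finset.range (n - r),
                qBracket q (β * (j : ℝ) - ρ - α * ((m : ℝ) + (i : ℝ)))) * x ^ K
            = (genStirlingCD (β - α) (-ρ) (1 - β) q m j *
              q ^ ((r : ℝ) * (β * (j : ℝ) - α * (m : ℝ) - ρ)) *
              qBinom (q ^ (-α)) n r *
              ∏ i ∈ Finset.range (n - r),
                qBracket q (β * (j : ℝ) - ρ - α * ((m : ℝ) + (i : ℝ)))) *
              (sHat q α β 0 r ((K : ℤ) - (j : ℤ)) * x ^ K) := fun K _ => by ring
        rw [Finset.sum_congr rfl hc, ← Finset.mul_sum, hinner r hr j hj]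
        unfold typeIIStirling
        ring
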